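/- Let ε ∈ (0,1) and let Δ be an integer with Δ ≥ 7/ε². Let d ≥ 1 and q' be integers with γ := q' − d ≥ εΔ and q' ≤ 2Δ. Let p_1, …, p_d ∈ [0, 1/γ]^{q'} be subdistributions, let g = g(p_1, …, p_d) be the coloring tree recursion output, and for each i define J_i := diag(1 − g)^{-1} · (√g √g^T − I) · diag(√(p_i ⊙ g)). Then sup over nonzero (x_1, …, x_d) of ‖Σ_{i=1}^d J_i x_i‖₂ / max_i ‖x_i‖₂ is at most exp(−ε/4). -/

import Mathlib

open Finset

/-- The coloring tree recursion:
`g_c(p_1, …, p_d) = Π_i (1 − p_i(c)) / Σ_b Π_i (1 − p_i(b))`. -/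
noncomputable def colorRec {q d : ℕ} (p : Fin d → Fin q → ℝ) (c : Fin q) : ℝ :=
  (∏ i, (1 - p i c)) / (∑ b, ∏ i, (1 - p i b))

/-- Euclidean norm of a vector in `ℝ^q`. -/
noncomputable def eucNorm {q : ℕ} (v : Fin q → ℝ) : ℝ := Real.sqrt (∑ c, v c ^ 2)

/-- The `i`-th Jacobian block of the message recursion:
`J_i = diag(1 − g)⁻¹ · (√g √gᵀ − I) · diag(√(p_i ⊙ g))`. -/
noncomputable def Jmat {q d : ℕ} (p : Fin d → Fin q → ℝ) (i : Fin d) :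
    Matrix (Fin q) (Fin q) ℝ :=
  Matrix.diagonal (fun c => (1 - colorRec p c)⁻¹) *
    (Matrix.vecMulVec (fun c => Real.sqrt (colorRec p c))
        (fun c => Real.sqrt (colorRec p c)) - 1) *
    Matrix.diagonal (fun c => Real.sqrt (p i c * colorRec p c))

-- Weierstrass product inequality
lemma aux_one_sub_sum_le_prod {ι : Type*} (s : Finset ι) (f : ι → ℝ)
    (h0 : ∀ i ∈ s, 0 ≤ f i) (h1 : ∀ i ∈ s, f i ≤ 1) :
    1 - ∑ i ∈ s, f i ≤ ∏ i ∈ s, (1 - f i) := by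
  induction s using Finset.cons_induction with
  | empty => simp
  | cons a s ha ih =>
    rw [Finset.prod_cons, Finset.sum_cons]
    have h0a := h0 a (Finset.mem_cons_self a s)
    have h1a := h1 a (Finset.mem_cons_self a s)
    have ihs := ih (fun i hi => h0 i (Finset.mem_cons_of_mem hi))
      (fun i hi => h1 i (Finset.mem_cons_of_mem hi))
    have hs0 : 0 ≤ ∑ i ∈ s, f i :=
      Finset.sum_nonneg fun i hi => h0 i (Finset.mem_cons_of_mem hi)
    nlinarith [mul_le_mul_of_nonneg_left ihs (by linarith : (0:ℝ) ≤ 1 - f a)]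

lemma aux_one_sub_le_exp (x : ℝ) : 1 - x ≤ Real.exp (-x) := by
  linarith [Real.add_one_le_exp (-x)]

lemma aux_exp_le_one_sub (p a : ℝ) (h0 : 0 ≤ p) (ha : 1 ≤ a) (hp : a * p ≤ a - 1) :
    Real.exp (-(a * p)) ≤ 1 - p := by
  have hE := Real.exp_pos (a * p)
  have h1 : 1 + a * p ≤ Real.exp (a * p) := by linarith [Real.add_one_le_exp (a * p)]
  have hp1 : p ≤ 1 := by nlinarith
  have key : 1 ≤ (1 - p) * Real.exp (a * p) := by nlinarith
  have h3 : Real.exp (-(a * p)) = 1 / Real.exp (a * p) := by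
    rw [Real.exp_neg, one_div]
  rw [h3, div_le_iff₀ hE]
  exact key

lemma aux_mul_exp_neg_le (t : ℝ) : t * Real.exp (-t) ≤ Real.exp (-1) := by
  have h : t ≤ Real.exp (t - 1) := by linarith [Real.add_one_le_exp (t - 1)]
  calc t * Real.exp (-t) ≤ Real.exp (t - 1) * Real.exp (-t) :=
        mul_le_mul_of_nonneg_right h (Real.exp_pos _).le
    _ = Real.exp (-1) := by rw [← Real.exp_add]; ring_nf

-- poor man's Jensen for exp
lemma aux_card_exp_le_sum_exp {ι : Type*} (s : Finset ι) (f : ι → ℝ) (m : ℝ)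
    (hm : (s.card : ℝ) * m = ∑ i ∈ s, f i) :
    (s.card : ℝ) * Real.exp m ≤ ∑ i ∈ s, Real.exp (f i) := by
  have h : ∀ i ∈ s, Real.exp m * (1 + (f i - m)) ≤ Real.exp (f i) := by
    intro i _
    have h1 : 1 + (f i - m) ≤ Real.exp (f i - m) := by
      linarith [Real.add_one_le_exp (f i - m)]
    calc Real.exp m * (1 + (f i - m)) ≤ Real.exp m * Real.exp (f i - m) :=
          mul_le_mul_of_nonneg_left h1 (Real.exp_pos m).le
      _ = Real.exp (f i) := by rw [← Real.exp_add]; ring_nf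
  have hsum : ∑ i ∈ s, Real.exp m * (1 + (f i - m)) = (s.card : ℝ) * Real.exp m := by
    rw [← Finset.mul_sum]
    have h2 : ∑ i ∈ s, (1 + (f i - m)) = (s.card : ℝ) * 1 + ((∑ i ∈ s, f i) - s.card * m) := by
      rw [Finset.sum_add_distrib, Finset.sum_sub_distrib]
      simp [Finset.sum_const, nsmul_eq_mul]
    rw [h2, ← hm]; ring
  calc (s.card : ℝ) * Real.exp m = ∑ i ∈ s, Real.exp m * (1 + (f i - m)) := hsum.symm
    _ ≤ ∑ i ∈ s, Real.exp (f i) := Finset.sum_le_sum h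

set_option maxHeartbeats 1000000 in
/-- Jacobian contraction with rate `exp(−ε/4)` in the regime `q = (1+ε)Δ`, `Δ ≥ 7/ε²`:
after reduction, a vertex has `d` free children and `q'` available colors with
`q' − d ≥ εΔ` and `q' ≤ 2Δ`. -/
theorem jacobian_contraction_eps (ε : ℝ) (hε0 : 0 < ε) (hε1 : ε < 1)
    (Δ : ℕ) (hΔ : 7 / ε ^ 2 ≤ (Δ : ℝ))
    (d q' : ℕ) (hd : 1 ≤ d)
    (hγ : ε * (Δ : ℝ) ≤ (q' : ℝ) - d) (hq' : (q' : ℝ) ≤ 2 * (Δ : ℝ))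
    (p : Fin d → Fin q' → ℝ)
    (h0 : ∀ i c, 0 ≤ p i c) (hB : ∀ i c, p i c ≤ 1 / ((q' : ℝ) - d))
    (hsub : ∀ i, ∑ c, p i c ≤ 1) :
    ∀ x : Fin d → Fin q' → ℝ,
      eucNorm (fun c => ∑ i, (Jmat p i).mulVec (x i) c) ≤
        Real.exp (-(ε / 4)) *
          (Finset.univ.sup' ⟨⟨0, hd⟩, Finset.mem_univ _⟩ fun i => eucNorm (x i)) := by
  intro x
  classical
  set M : ℝ := Finset.univ.sup' ⟨⟨0, hd⟩, Finset.mem_univ _⟩ (fun i => eucNorm (x i)) with hM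
  set G : ℝ := (q' : ℝ) - d with hG
  set u : Fin q' → ℝ := fun c => ∏ i, (1 - p i c) with hu
  set D : ℝ := ∑ b, ∏ i, (1 - p i b) with hD
  set g : Fin q' → ℝ := colorRec p with hgdef
  have hgc : ∀ c, g c = u c / D := fun c => rfl
  -- numeric facts
  have hε2 : (0:ℝ) < ε ^ 2 := by positivity
  have hΔ0 : (0:ℝ) < Δ := lt_of_lt_of_le (by positivity) hΔ
  have hG7ε : 7 / ε ≤ G := by
    have h1 : 7 / ε = ε * (7 / ε ^ 2) := by field_simp
    calc 7 / ε = ε * (7 / ε ^ 2) := h1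
      _ ≤ ε * Δ := mul_le_mul_of_nonneg_left hΔ hε0.le
      _ ≤ G := hγ
  have h7lt : (7:ℝ) ≤ 7 / ε := by
    rw [le_div_iff₀ hε0]; nlinarith
  have hG7 : (7:ℝ) ≤ G := le_trans h7lt hG7ε
  have hG0 : (0:ℝ) < G := by linarith
  have hG1 : (1:ℝ) < G := by linarith
  have hd1 : (1:ℝ) ≤ (d:ℝ) := by exact_mod_cast hd
  have hq'pos : (0:ℝ) < (q':ℝ) := by linarith
  -- bounds on p
  have hp_lt1 : ∀ i c, p i c < 1 := fun i c =>
    lt_of_le_of_lt (hB i c) (by rw [div_lt_one hG0]; linarith)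
  have hu_pos : ∀ c, 0 < u c := fun c =>
    Finset.prod_pos fun i _ => by linarith [hp_lt1 i c]
  have hu_le1 : ∀ c, u c ≤ 1 :=
    fun c => Finset.prod_le_one (fun i _ => by linarith [hp_lt1 i c])
      (fun i _ => by linarith [h0 i c])
  set S : Fin q' → ℝ := fun c => ∑ i, p i c with hS
  have hS0 : ∀ c, 0 ≤ S c := fun c => Finset.sum_nonneg fun i _ => h0 i c
  have hSsum : ∑ b, S b ≤ (d:ℝ) := by
    simp only [hS]
    calc ∑ b : Fin q', ∑ i, p i b = ∑ i, ∑ b, p i b := Finset.sum_comm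
      _ ≤ ∑ _i : Fin d, (1:ℝ) := Finset.sum_le_sum fun i _ => hsub i
      _ = (d:ℝ) := by simp
  have hu_ge0 : ∀ c, 1 - S c ≤ u c := fun c =>
    aux_one_sub_sum_le_prod _ _ (fun i _ => h0 i c) (fun i _ => (hp_lt1 i c).le)
  have hD_ge_G : G ≤ D := by
    have h1 : ∑ b, (1 - S b) ≤ ∑ b, u b := Finset.sum_le_sum fun b _ => hu_ge0 b
    have h2 : ∑ b : Fin q', (1 - S b) = (q':ℝ) - ∑ b, S b := by
      rw [Finset.sum_sub_distrib]; simp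
    have h3 : ∑ b, u b = D := rfl
    rw [h2, h3] at h1
    rw [hG]; linarith
  have hD_pos : 0 < D := lt_of_lt_of_le hG0 hD_ge_G
  -- facts on g
  have hg0 : ∀ c, 0 ≤ g c := fun c => by
    rw [hgc c]; exact div_nonneg (hu_pos c).le hD_pos.le
  have hg_le : ∀ c, g c ≤ 1 / G := fun c => by
    rw [hgc c]
    exact div_le_div₀ zero_le_one (hu_le1 c) hG0 hD_ge_G
  have hg_sum : ∑ c, g c = 1 := by
    simp only [hgc]
    rw [← Finset.sum_div]
    have h3 : ∑ b, u b = D := rfl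
    rw [h3, div_self hD_pos.ne']
  have hGinv : 1 / G < 1 := by rw [div_lt_one hG0]; linarith
  have hg_lt1 : ∀ c, g c < 1 := fun c => lt_of_le_of_lt (hg_le c) hGinv
  have h1g_pos : ∀ c, 0 < 1 - g c := fun c => by linarith [hg_lt1 c]
  have h1G_pos : (0:ℝ) < 1 - 1/G := by linarith
  set a : ℝ := G / (G - 1) with ha
  have hGm1 : (0:ℝ) < G - 1 := by linarith
  have ha1 : 1 ≤ a := by rw [ha, le_div_iff₀ hGm1]; linarith
  have ha0 : 0 < a := by linarith
  have ha_eq : (1 - 1/G)⁻¹ = a := by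
    rw [ha]; rw [show 1 - 1/G = (G-1)/G by field_simp]
    rw [inv_div]
  have hinv_le : ∀ c, (1 - g c)⁻¹ ≤ a := fun c => by
    rw [← ha_eq]
    exact inv_anti₀ h1G_pos (by linarith [hg_le c])
  -- entries of Jmat
  have hentry : ∀ (i : Fin d) (c b : Fin q'), Jmat p i c b
      = (1 - g c)⁻¹ * ((Real.sqrt (g c) * Real.sqrt (g b) - (if c = b then (1:ℝ) else 0))
        * Real.sqrt (p i b * g b)) := by
    intro i c b
    simp only [Jmat, Matrix.mul_diagonal, Matrix.diagonal_mul, Matrix.sub_apply,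
      Matrix.vecMulVec_apply, Matrix.one_apply, ← hgdef]
    ring
  -- mulVec formula
  have hmulVec : ∀ (i : Fin d) (c : Fin q'), (Jmat p i).mulVec (x i) c
      = (1 - g c)⁻¹ * Real.sqrt (g c) *
        ((∑ b, g b * (Real.sqrt (p i b) * x i b)) - Real.sqrt (p i c) * x i c) := by
    intro i c
    have hterm : ∀ b : Fin q', Jmat p i c b * x i b
        = (1 - g c)⁻¹ * Real.sqrt (g c) * (g b * (Real.sqrt (p i b) * x i b))
          - (if c = b then (1 - g c)⁻¹ * Real.sqrt (g c) * (Real.sqrt (p i c) * x i c)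
            else 0) := by
      intro b
      rw [hentry i c b, Real.sqrt_mul (h0 i b)]
      by_cases hcb : c = b
      · subst hcb
        rw [if_pos rfl, if_pos rfl]
        linear_combination ((1 - g c)⁻¹ * Real.sqrt (p i c) * x i c * Real.sqrt (g c)) *
          (Real.mul_self_sqrt (hg0 c))
      · rw [if_neg hcb, if_neg hcb]
        linear_combination ((1 - g c)⁻¹ * Real.sqrt (g c) * Real.sqrt (p i b) * x i b) *
          (Real.mul_self_sqrt (hg0 b))
    have hmv : (Jmat p i).mulVec (x i) c = ∑ b, Jmat p i c b * x i b := rfl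
    rw [hmv, Finset.sum_congr rfl fun b _ => hterm b, Finset.sum_sub_distrib]
    rw [← Finset.mul_sum]
    simp only [Finset.sum_ite_eq, Finset.mem_univ, if_true]
    ring
  set y : Fin q' → ℝ := fun c => ∑ i, Real.sqrt (p i c) * x i c with hy
  set m : ℝ := ∑ b, g b * y b with hm
  have hT : ∀ c, (∑ i, (Jmat p i).mulVec (x i) c)
      = (1 - g c)⁻¹ * Real.sqrt (g c) * (m - y c) := by
    intro c
    rw [Finset.sum_congr rfl fun i _ => hmulVec i c, ← Finset.mul_sum,
      Finset.sum_sub_distrib]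
    have hA : ∑ i : Fin d, ∑ b, g b * (Real.sqrt (p i b) * x i b) = m := by
      rw [Finset.sum_comm, hm]
      refine Finset.sum_congr rfl fun b _ => ?_
      simp only [hy, Finset.mul_sum]
    have hB' : ∑ i : Fin d, Real.sqrt (p i c) * x i c = y c := rfl
    rw [hA, hB']
  -- main quantities
  set r : ℝ := (d:ℝ)/(q':ℝ) with hr
  have hr0 : 0 ≤ r := by positivity
  have hr1 : r ≤ 1 - ε/2 := by
    have h1 : ε/2 * (q':ℝ) ≤ G := by
      calc ε/2 * (q':ℝ) ≤ ε/2 * (2*Δ) := by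
            apply mul_le_mul_of_nonneg_left hq' (by linarith)
        _ = ε * Δ := by ring
        _ ≤ G := hγ
    have h2 : (d:ℝ) = (q':ℝ) - G := by rw [hG]; ring
    rw [hr, h2, div_le_iff₀ hq'pos]
    nlinarith
  have hrle1 : r ≤ 1 := by linarith
  set K : ℝ := Real.exp (a * r - 1) / (q':ℝ) with hK
  have hK0 : 0 ≤ K := by
    rw [hK]; exact (div_pos (Real.exp_pos _) hq'pos).le
  -- key bound  g c * S c ≤ K
  have e5 : ∀ c, g c * S c ≤ K := by
    intro c
    have hue : u c ≤ Real.exp (-(S c)) := by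
      calc u c ≤ ∏ i, Real.exp (-(p i c)) :=
            Finset.prod_le_prod (fun i _ => by linarith [hp_lt1 i c])
              (fun i _ => aux_one_sub_le_exp (p i c))
        _ = Real.exp (∑ i, -(p i c)) := (Real.exp_sum _ _).symm
        _ = Real.exp (-(S c)) := by congr 1; simp [hS]
    have huS : u c * S c ≤ Real.exp (-1) := by
      calc u c * S c ≤ Real.exp (-(S c)) * S c :=
            mul_le_mul_of_nonneg_right hue (hS0 c)
        _ = S c * Real.exp (-(S c)) := by ring
        _ ≤ Real.exp (-1) := aux_mul_exp_neg_le (S c)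
    have hub : ∀ b, Real.exp (-(a * S b)) ≤ u b := by
      intro b
      have h1 : ∀ i : Fin d, Real.exp (-(a * p i b)) ≤ 1 - p i b := by
        intro i
        apply aux_exp_le_one_sub _ _ (h0 i b) ha1
        have hap : a * p i b ≤ a * (1/G) :=
          mul_le_mul_of_nonneg_left (hB i b) ha0.le
        have heq : a * (1/G) = a - 1 := by rw [ha]; field_simp; ring
        linarith
      calc Real.exp (-(a * S b)) = ∏ i, Real.exp (-(a * p i b)) := by
            rw [← Real.exp_sum]; congr 1
            simp only [hS, Finset.mul_sum, Finset.sum_neg_distrib]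
        _ ≤ ∏ i, (1 - p i b) :=
            Finset.prod_le_prod (fun i _ => (Real.exp_pos _).le) (fun i _ => h1 i)
        _ = u b := rfl
    have hDlow : (q':ℝ) * Real.exp (-(a * r)) ≤ D := by
      have hq'card : ((Finset.univ : Finset (Fin q')).card : ℝ) = (q' : ℝ) := by simp
      have hJ := aux_card_exp_le_sum_exp Finset.univ (fun b : Fin q' => -(a * S b))
        ((∑ b, (-(a * S b)))/(q':ℝ)) (by rw [hq'card]; field_simp)
      rw [hq'card] at hJ
      have h2 : ∑ b, Real.exp (-(a * S b)) ≤ ∑ b, u b :=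
        Finset.sum_le_sum fun b _ => hub b
      have h3 : ∑ b, u b = D := rfl
      have h5 : ∑ b : Fin q', (-(a * S b)) = -(a * ∑ b, S b) := by
        rw [Finset.sum_neg_distrib, Finset.mul_sum]
      have h4 : Real.exp (-(a * r)) ≤ Real.exp ((∑ b, (-(a * S b)))/(q':ℝ)) := by
        apply Real.exp_le_exp.mpr
        rw [h5, le_div_iff₀ hq'pos]
        have h6 : a * ∑ b, S b ≤ a * d := mul_le_mul_of_nonneg_left hSsum ha0.le
        have h7 : -(a * r) * (q':ℝ) = -(a * d) := by rw [hr]; field_simp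
        rw [h7]
        linarith
      calc (q':ℝ) * Real.exp (-(a * r))
          ≤ (q':ℝ) * Real.exp ((∑ b, (-(a * S b)))/(q':ℝ)) :=
            mul_le_mul_of_nonneg_left h4 hq'pos.le
        _ ≤ ∑ b, Real.exp (-(a * S b)) := hJ
        _ ≤ D := le_trans h2 (le_of_eq h3)
    have hgSeq : g c * S c = (u c * S c) / D := by rw [hgc c]; ring
    rw [hgSeq, hK]
    have hqe : 0 < (q':ℝ) * Real.exp (-(a*r)) := by positivity
    calc (u c * S c)/D ≤ Real.exp (-1) / ((q':ℝ) * Real.exp (-(a*r))) :=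
          div_le_div₀ (Real.exp_pos _).le huS hqe hDlow
      _ = (Real.exp (-1) / Real.exp (-(a*r))) / (q':ℝ) := by ring
      _ = Real.exp (a*r - 1) / (q':ℝ) := by rw [← Real.exp_sub]; ring_nf
  -- norms
  have hMge : ∀ i, eucNorm (x i) ≤ M := fun i => by
    rw [hM]; exact Finset.le_sup' (fun j => eucNorm (x j)) (Finset.mem_univ i)
  have hM0 : 0 ≤ M := le_trans (Real.sqrt_nonneg _) (hMge ⟨0, hd⟩)
  have hxM : ∀ i, ∑ c, (x i c)^2 ≤ M^2 := by
    intro i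
    have h1 : eucNorm (x i) ≤ M := hMge i
    have h2 : 0 ≤ eucNorm (x i) := Real.sqrt_nonneg _
    have h3 : (eucNorm (x i))^2 = ∑ c, (x i c)^2 :=
      Real.sq_sqrt (Finset.sum_nonneg fun c _ => sq_nonneg _)
    calc ∑ c, (x i c)^2 = (eucNorm (x i))^2 := h3.symm
      _ ≤ M^2 := pow_le_pow_left₀ h2 h1 2
  -- arithmetic bound
  have harith : a^2 * Real.exp (a*r - 1) * r ≤ Real.exp (-(ε/2)) := by
    have haexp : a ≤ Real.exp (1/(G-1)) := by
      have heq : a = 1 + 1/(G-1) := by rw [ha]; field_simp; ring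
      rw [heq]
      linarith [Real.add_one_le_exp (1/(G-1))]
    have ha2 : a^2 ≤ Real.exp (2/(G-1)) := by
      have h1 : a^2 ≤ (Real.exp (1/(G-1)))^2 := by nlinarith
      have h2 : (Real.exp (1/(G-1)))^2 = Real.exp (2/(G-1)) := by
        rw [← Real.exp_nat_mul]
        · congr 1; ring
      linarith
    have harexp : Real.exp (a*r - 1) = Real.exp (r - 1) * Real.exp ((a-1)*r) := by
      rw [← Real.exp_add]; ring_nf
    have ha1' : a - 1 = 1/(G-1) := by rw [ha]; field_simp; ring
    have hfact1 : (a - 1) * r ≤ 1/(G-1) := by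
      rw [ha1']
      calc 1/(G-1) * r ≤ 1/(G-1) * 1 :=
            mul_le_mul_of_nonneg_left hrle1 (by positivity)
        _ = 1/(G-1) := mul_one _
    have hfact2 : r * Real.exp (r - 1) ≤ Real.exp (-ε) := by
      have h1 : r * Real.exp (r-1) ≤ (1 - ε/2) * Real.exp (-(ε/2)) := by
        apply mul_le_mul hr1 (Real.exp_le_exp.mpr (by linarith)) (Real.exp_pos _).le
          (by linarith)
      have h2 : (1 - ε/2) * Real.exp (-(ε/2)) ≤ Real.exp (-(ε/2)) * Real.exp (-(ε/2)) :=
        mul_le_mul_of_nonneg_right (aux_one_sub_le_exp (ε/2)) (Real.exp_pos _).le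
      have h3 : Real.exp (-(ε/2)) * Real.exp (-(ε/2)) = Real.exp (-ε) := by
        rw [← Real.exp_add]; ring_nf
      linarith
    have h36 : 3/(G-1) ≤ ε/2 := by
      have hinv1 : (1:ℝ) ≤ 1/ε := by rw [le_div_iff₀ hε0]; linarith
      have h6 : 6/ε ≤ G - 1 := by
        have h7 : 7/ε - 1/ε = 6/ε := by ring
        linarith
      have h6pos : (0:ℝ) < 6/ε := by positivity
      calc 3/(G-1) ≤ 3/(6/ε) := by
            apply div_le_div_of_nonneg_left (by norm_num) h6pos h6
        _ = ε/2 := by field_simp; ring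
    calc a^2 * Real.exp (a*r - 1) * r
        = a^2 * Real.exp ((a-1)*r) * (r * Real.exp (r - 1)) := by
          rw [harexp]; ring
      _ ≤ Real.exp (2/(G-1)) * Real.exp (1/(G-1)) * Real.exp (-ε) := by
          have hx1 : Real.exp ((a-1)*r) ≤ Real.exp (1/(G-1)) :=
            Real.exp_le_exp.mpr hfact1
          have hpos1 : (0:ℝ) ≤ a^2 := sq_nonneg a
          have hpos2 : (0:ℝ) ≤ r * Real.exp (r-1) :=
            mul_nonneg hr0 (Real.exp_pos _).le
          have step1 : a^2 * Real.exp ((a-1)*r) ≤ Real.exp (2/(G-1)) * Real.exp (1/(G-1)) := by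
            apply mul_le_mul ha2 hx1 (Real.exp_pos _).le (Real.exp_pos _).le
          apply mul_le_mul step1 hfact2 hpos2
          positivity
      _ = Real.exp (2/(G-1) + 1/(G-1) + -ε) := by
          rw [← Real.exp_add, ← Real.exp_add]
      _ ≤ Real.exp (-(ε/2)) := by
          apply Real.exp_le_exp.mpr
          have : 2/(G-1) + 1/(G-1) = 3/(G-1) := by ring
          linarith
  -- chain of inequalities
  have hchain : ∑ c, (∑ i, (Jmat p i).mulVec (x i) c)^2 ≤ Real.exp (-(ε/2)) * M^2 := by
    have e1 : ∀ c, (∑ i, (Jmat p i).mulVec (x i) c)^2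
        = ((1 - g c)⁻¹)^2 * (g c * (m - y c)^2) := by
      intro c
      rw [hT c, mul_pow, mul_pow, Real.sq_sqrt (hg0 c)]
      ring
    have e2 : ∀ c, ((1 - g c)⁻¹)^2 * (g c * (m - y c)^2) ≤ a^2 * (g c * (m - y c)^2) := by
      intro c
      apply mul_le_mul_of_nonneg_right _ (mul_nonneg (hg0 c) (sq_nonneg _))
      have h1 := hinv_le c
      have h2 : 0 ≤ (1 - g c)⁻¹ := (inv_pos.mpr (h1g_pos c)).le
      nlinarith
    have e3 : ∑ c, g c * (m - y c)^2 ≤ ∑ c, g c * (y c)^2 := by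
      have expand : ∀ c : Fin q', g c * (m - y c)^2
          = g c * (y c)^2 - 2*m*(g c * y c) + m^2 * g c := by
        intro c; ring
      have hexp : ∑ c, g c * (m - y c)^2
          = (∑ c, g c * (y c)^2) - 2*m*(∑ c, g c * y c) + m^2 * (∑ c, g c) := by
        rw [Finset.sum_congr rfl fun c _ => expand c, Finset.sum_add_distrib,
          Finset.sum_sub_distrib, ← Finset.mul_sum, ← Finset.mul_sum]
      rw [hexp, hg_sum, ← hm]
      nlinarith [sq_nonneg m]
    have e4 : ∀ c, (y c)^2 ≤ S c * ∑ i, (x i c)^2 := by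
      intro c
      have hcs := Finset.sum_mul_sq_le_sq_mul_sq Finset.univ
        (fun i => Real.sqrt (p i c)) (fun i => x i c)
      have hps : ∑ i : Fin d, (Real.sqrt (p i c))^2 = S c := by
        simp only [hS]
        exact Finset.sum_congr rfl fun i _ => Real.sq_sqrt (h0 i c)
      simp only [hy]
      calc (∑ i, Real.sqrt (p i c) * x i c)^2
          ≤ (∑ i, (Real.sqrt (p i c))^2) * ∑ i, (x i c)^2 := hcs
        _ = S c * ∑ i, (x i c)^2 := by rw [hps]
    calc ∑ c, (∑ i, (Jmat p i).mulVec (x i) c)^2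
        = ∑ c, ((1 - g c)⁻¹)^2 * (g c * (m - y c)^2) :=
          Finset.sum_congr rfl fun c _ => e1 c
      _ ≤ ∑ c, a^2 * (g c * (m - y c)^2) := Finset.sum_le_sum fun c _ => e2 c
      _ = a^2 * ∑ c, g c * (m - y c)^2 := by rw [Finset.mul_sum]
      _ ≤ a^2 * ∑ c, g c * (y c)^2 :=
          mul_le_mul_of_nonneg_left e3 (sq_nonneg a)
      _ ≤ a^2 * ∑ c, K * ∑ i, (x i c)^2 := by
          apply mul_le_mul_of_nonneg_left _ (sq_nonneg a)
          apply Finset.sum_le_sum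
          intro c _
          calc g c * (y c)^2 ≤ g c * (S c * ∑ i, (x i c)^2) :=
                mul_le_mul_of_nonneg_left (e4 c) (hg0 c)
            _ = (g c * S c) * ∑ i, (x i c)^2 := by ring
            _ ≤ K * ∑ i, (x i c)^2 :=
                mul_le_mul_of_nonneg_right (e5 c)
                  (Finset.sum_nonneg fun i _ => sq_nonneg _)
      _ = a^2 * (K * ∑ i, ∑ c, (x i c)^2) := by
          rw [← Finset.mul_sum, Finset.sum_comm]
      _ ≤ a^2 * (K * ((d:ℝ) * M^2)) := by
          apply mul_le_mul_of_nonneg_left _ (sq_nonneg a)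
          apply mul_le_mul_of_nonneg_left _ hK0
          calc ∑ i, ∑ c, (x i c)^2 ≤ ∑ _i : Fin d, M^2 :=
                Finset.sum_le_sum fun i _ => hxM i
            _ = (d:ℝ) * M^2 := by
                rw [Finset.sum_const]; simp [nsmul_eq_mul]
      _ = (a^2 * Real.exp (a*r - 1) * r) * M^2 := by
          rw [hK, hr]; field_simp
      _ ≤ Real.exp (-(ε/2)) * M^2 :=
          mul_le_mul_of_nonneg_right harith (sq_nonneg M)
  -- conclusion
  have hfin : eucNorm (fun c => ∑ i, (Jmat p i).mulVec (x i) c)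
      = Real.sqrt (∑ c, (∑ i, (Jmat p i).mulVec (x i) c)^2) := rfl
  rw [hfin]
  calc Real.sqrt (∑ c, (∑ i, (Jmat p i).mulVec (x i) c)^2)
      ≤ Real.sqrt (Real.exp (-(ε/2)) * M^2) := Real.sqrt_le_sqrt hchain
    _ = Real.exp (-(ε/4)) * M := by
        rw [Real.sqrt_mul (Real.exp_pos _).le, Real.sqrt_sq hM0, ← Real.exp_half,
          show -(ε/2)/2 = -(ε/4) from by ring]
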